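/- Let X be a connected graph and g an isometry of X. Suppose there exists a bi-infinite geodesic γ in X on which g acts as a translation of length ℓ ≥ 1, i.e. g·γ(n) = γ(n+ℓ) for all n ∈ ℤ. Then d(x, g·x) ≥ ℓ for every vertex x of X. Moreover, if a vertex x satisfies d(x, g·x) = ℓ, then d(x, gⁿ·x) = n·ℓ for all n ≥ 0, and consequently x lies on a bi-infinite geodesic on which g acts as a translation of length ℓ. -/

import Mathlib

open Filter Topology

namespace QM

variable {V : Type*}

/-- A quasi-median graph: connected, no induced `K₄⁻`, no induced `K_{3,2}`, and
satisfying the triangle and quadrangle conditions. -/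
structure IsQuasiMedian (G : SimpleGraph V) : Prop where
  connected : G.Connected
  no_K4minus : ∀ a b c d : V, a ≠ d → G.Adj a b → G.Adj a c → G.Adj b c →
    G.Adj b d → G.Adj c d → G.Adj a d
  no_K32 : ∀ x₁ x₂ x₃ y₁ y₂ : V, x₁ ≠ x₂ → x₁ ≠ x₃ → x₂ ≠ x₃ → y₁ ≠ y₂ →
    G.Adj x₁ y₁ → G.Adj x₁ y₂ → G.Adj x₂ y₁ → G.Adj x₂ y₂ → G.Adj x₃ y₁ → G.Adj x₃ y₂ →
    G.Adj x₁ x₂ ∨ G.Adj x₁ x₃ ∨ G.Adj x₂ x₃ ∨ G.Adj y₁ y₂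
  triangle : ∀ a x y : V, G.Adj x y → G.dist a x = G.dist a y →
    ∃ z, G.Adj x z ∧ G.Adj y z ∧ G.dist a z + 1 = G.dist a x
  quadrangle : ∀ a x y z : V, x ≠ y → G.Adj x z → G.Adj y z →
    G.dist a x = G.dist a y → G.dist a x + 1 = G.dist a z →
    ∃ w, G.Adj x w ∧ G.Adj y w ∧ G.dist a w + 2 = G.dist a z

/-- Two edges are elementarily related if they belong to a common triangle or are
opposite sides of a 4-cycle. -/
def EdgeRel (G : SimpleGraph V) (e f : Sym2 V) : Prop :=
  (∃ a b c : V, G.Adj a b ∧ G.Adj b c ∧ G.Adj a c ∧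
    (e = s(a, b) ∨ e = s(b, c) ∨ e = s(a, c)) ∧ (f = s(a, b) ∨ f = s(b, c) ∨ f = s(a, c))) ∨
  (∃ a b c d : V, G.Adj a b ∧ G.Adj b c ∧ G.Adj c d ∧ G.Adj d a ∧
    e = s(a, b) ∧ f = s(c, d))

/-- The hyperplane (equivalence class) of an edge. -/
def hyperplaneOf (G : SimpleGraph V) (e : Sym2 V) : Set (Sym2 V) :=
  {f | f ∈ G.edgeSet ∧ Relation.ReflTransGen (EdgeRel G) e f}

/-- A hyperplane is an equivalence class of edges. -/
def IsHyperplane (G : SimpleGraph V) (J : Set (Sym2 V)) : Prop :=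
  ∃ e ∈ G.edgeSet, J = hyperplaneOf G e

/-- A sector delimited by the set of edges `J`: a connected component of the graph
obtained by deleting the edges of `J`. -/
def IsSector (G : SimpleGraph V) (J : Set (Sym2 V)) (S : Set V) : Prop :=
  ∃ x : V, S = {y | (G.deleteEdges J).Reachable x y}

/-- `J` separates the vertices `x` and `y`: they lie in distinct sectors. -/
def SepVerts (G : SimpleGraph V) (J : Set (Sym2 V)) (x y : V) : Prop :=
  ¬ (G.deleteEdges J).Reachable x y

/-- `J` separates the sets `A` and `B`: each lies in a single sector, and these
sectors differ. -/
def SepSets (G : SimpleGraph V) (J : Set (Sym2 V)) (A B : Set V) : Prop :=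
  (∀ a ∈ A, ∀ a' ∈ A, (G.deleteEdges J).Reachable a a') ∧
  (∀ b ∈ B, ∀ b' ∈ B, (G.deleteEdges J).Reachable b b') ∧
  (∀ a ∈ A, ∀ b ∈ B, ¬ (G.deleteEdges J).Reachable a b)

/-- The carrier of a set of edges: all endpoints of its edges. -/
def carrier (J : Set (Sym2 V)) : Set V := {v | ∃ e ∈ J, v ∈ e}

/-- Two sets of edges are transverse if they contain two edges spanning a 4-cycle. -/
def Transverse (G : SimpleGraph V) (J₁ J₂ : Set (Sym2 V)) : Prop :=
  ∃ a b c d : V, G.Adj a b ∧ G.Adj b c ∧ G.Adj c d ∧ G.Adj d a ∧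
    ((s(a, b) ∈ J₁ ∧ s(b, c) ∈ J₂) ∨ (s(a, b) ∈ J₂ ∧ s(b, c) ∈ J₁))

/-- Two sets of edges are in contact if their carriers share a vertex. -/
def InContact (J₁ J₂ : Set (Sym2 V)) : Prop := (carrier J₁ ∩ carrier J₂).Nonempty

/-- The type of hyperplanes of `G`. -/
def Hyperplanes (G : SimpleGraph V) := {J : Set (Sym2 V) // IsHyperplane G J}

/-- The crossing graph: vertices are hyperplanes, adjacent when transverse. -/
def crossingGraph (G : SimpleGraph V) : SimpleGraph (Hyperplanes G) where
  Adj J K := J ≠ K ∧ Transverse G J.1 K.1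
  symm := ⟨by
    rintro J K ⟨hne, a, b, c, d, h1, h2, h3, h4, h5⟩
    exact ⟨hne.symm, a, b, c, d, h1, h2, h3, h4, h5.symm⟩⟩
  loopless := ⟨fun J h => h.1 rfl⟩

/-- The contact graph: vertices are hyperplanes, adjacent when in contact. -/
def contactGraph (G : SimpleGraph V) : SimpleGraph (Hyperplanes G) where
  Adj J K := J ≠ K ∧ InContact J.1 K.1
  symm := ⟨by
    rintro J K ⟨hne, x, hx1, hx2⟩
    exact ⟨hne.symm, x, hx2, hx1⟩⟩
  loopless := ⟨fun J h => h.1 rfl⟩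

/-- A permutation of the vertices is an automorphism (equivalently, for a connected
graph, an isometry) if it preserves adjacency. -/
def IsAut (G : SimpleGraph V) (g : Equiv.Perm V) : Prop :=
  ∀ x y : V, G.Adj (g x) (g y) ↔ G.Adj x y

lemma IsAut.symm {G : SimpleGraph V} {g : Equiv.Perm V} (hg : IsAut G g) : IsAut G g.symm := by
  intro x y
  conv_rhs => rw [← g.apply_symm_apply x, ← g.apply_symm_apply y]
  exact (hg _ _).symm

lemma edgeRel_map {G : SimpleGraph V} {g : Equiv.Perm V} (hg : IsAut G g)
    {e f : Sym2 V} (h : EdgeRel G e f) :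
    EdgeRel G (Sym2.map g e) (Sym2.map g f) := by
  rcases h with ⟨a, b, c, h1, h2, h3, he, hf⟩ | ⟨a, b, c, d, h1, h2, h3, h4, he, hf⟩
  · refine Or.inl ⟨g a, g b, g c, (hg a b).mpr h1, (hg b c).mpr h2, (hg a c).mpr h3, ?_, ?_⟩
    · rcases he with rfl | rfl | rfl <;> simp [Sym2.map_pair_eq]
    · rcases hf with rfl | rfl | rfl <;> simp [Sym2.map_pair_eq]
  · exact Or.inr ⟨g a, g b, g c, g d, (hg a b).mpr h1, (hg b c).mpr h2, (hg c d).mpr h3,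
      (hg d a).mpr h4, by simp [he, Sym2.map_pair_eq], by simp [hf, Sym2.map_pair_eq]⟩

lemma mem_edgeSet_map {G : SimpleGraph V} {g : Equiv.Perm V} (hg : IsAut G g)
    {e : Sym2 V} (he : e ∈ G.edgeSet) : Sym2.map g e ∈ G.edgeSet := by
  induction e using Sym2.ind with
  | _ x y =>
    rw [Sym2.map_pair_eq, SimpleGraph.mem_edgeSet] at *
    exact (hg x y).mpr he

lemma map_symm_map {g : Equiv.Perm V} (s : Sym2 V) :
    Sym2.map g (Sym2.map g.symm s) = s := by
  rw [Sym2.map_map]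
  simp

lemma isHyperplane_map {G : SimpleGraph V} {g : Equiv.Perm V} (hg : IsAut G g)
    {J : Set (Sym2 V)} (hJ : IsHyperplane G J) :
    IsHyperplane G (Sym2.map g '' J) := by
  obtain ⟨e, he, rfl⟩ := hJ
  refine ⟨Sym2.map g e, mem_edgeSet_map hg he, ?_⟩
  ext f
  constructor
  · rintro ⟨f', ⟨hf1, hf2⟩, rfl⟩
    exact ⟨mem_edgeSet_map hg hf1,
      Relation.ReflTransGen.lift (Sym2.map g) (fun a b h => edgeRel_map hg h) _ _ hf2⟩
  · rintro ⟨hf1, hf2⟩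
    refine ⟨Sym2.map g.symm f, ⟨mem_edgeSet_map hg.symm hf1, ?_⟩, map_symm_map f⟩
    have := Relation.ReflTransGen.lift (Sym2.map g.symm)
      (fun a b h => edgeRel_map hg.symm h) _ _ hf2
    have h2 : Sym2.map g.symm (Sym2.map g e) = e := by
      rw [Sym2.map_map]; simp
    rw [Function.onFun, h2] at this
    exact this

/-- The map induced on hyperplanes by an automorphism. -/
def hypMap (G : SimpleGraph V) {g : Equiv.Perm V} (hg : IsAut G g) :
    Hyperplanes G → Hyperplanes G :=
  fun J => ⟨Sym2.map g '' J.1, isHyperplane_map hg J.2⟩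

/-- A bi-infinite geodesic in a graph: an isometric embedding of `ℤ`. -/
def IsBiGeodesic {W : Type*} (H : SimpleGraph W) (γ : ℤ → W) : Prop :=
  ∀ m n : ℤ, H.dist (γ m) (γ n) = (m - n).natAbs

/-- An axis of a map `φ`: a bi-infinite geodesic on which `φ` acts as a translation
of positive length. -/
def IsAxisOf {W : Type*} (H : SimpleGraph W) (φ : W → W) (γ : ℤ → W) : Prop :=
  IsBiGeodesic H γ ∧ ∃ ℓ : ℕ, 1 ≤ ℓ ∧ ∀ n : ℤ, φ (γ n) = γ (n + ℓ)

/-- A set of vertices is convex if it contains every geodesic between two of its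
vertices. -/
def ConvexSet (G : SimpleGraph V) (S : Set V) : Prop :=
  ∀ x ∈ S, ∀ y ∈ S, ∀ p : G.Walk x y, p.length = G.dist x y → ∀ v ∈ p.support, v ∈ S

/-- The convex hull of a set of vertices. -/
def convexHullSet (G : SimpleGraph V) (S : Set V) : Set V :=
  ⋂₀ {T : Set V | ConvexSet G T ∧ S ⊆ T}

/-- `p` is a gate of `x` in `S`. -/
def IsGate (G : SimpleGraph V) (S : Set V) (x p : V) : Prop :=
  p ∈ S ∧ ∀ z ∈ S, G.dist x p + G.dist p z = G.dist x z

/-- A set of vertices is gated if every vertex admits a gate in it. -/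
def Gated (G : SimpleGraph V) (S : Set V) : Prop :=
  ∀ x : V, ∃ p : V, IsGate G S x p

/-- A maximal complete subgraph, viewed as a set of vertices. -/
def IsMaxClique (G : SimpleGraph V) (C : Set V) : Prop :=
  G.IsClique C ∧ ∀ D : Set V, G.IsClique D → C ⊆ D → C = D

/-- Every vertex belongs to at most `N` (maximal) cliques. -/
def CliqueBound (G : SimpleGraph V) (N : ℕ) : Prop :=
  ∀ v : V, {C : Set V | IsMaxClique G C ∧ v ∈ C}.Finite ∧
    {C : Set V | IsMaxClique G C ∧ v ∈ C}.ncard ≤ N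

/-- A cut-vertex: removing it disconnects the graph. -/
def IsCutVertex (G : SimpleGraph V) (v : V) : Prop :=
  ¬ (G.induce {u : V | u ≠ v}).Connected

/-- Hausdorff distance between two sets of vertices, valued in `ℕ∞`. -/
noncomputable def hausDist (G : SimpleGraph V) (A B : Set V) : ℕ∞ :=
  max (⨆ a ∈ A, ⨅ b ∈ B, (G.dist a b : ℕ∞)) (⨆ b ∈ B, ⨅ a ∈ A, (G.dist a b : ℕ∞))

/-- `QC(γ)`: the supremum of Hausdorff distances between bi-infinite geodesics
contained in the convex hull of `γ`. -/
noncomputable def qc (G : SimpleGraph V) (γ : ℤ → V) : ℕ∞ :=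
  ⨆ (α : ℤ → V) (_ : IsBiGeodesic G α ∧ Set.range α ⊆ convexHullSet G (Set.range γ))
    (β : ℤ → V) (_ : IsBiGeodesic G β ∧ Set.range β ⊆ convexHullSet G (Set.range γ)),
    hausDist G (Set.range α) (Set.range β)

/-- `J` crosses the bi-infinite geodesic `γ`: it separates two of its vertices. -/
def Crosses (G : SimpleGraph V) (J : Set (Sym2 V)) (γ : ℤ → V) : Prop :=
  ∃ m n : ℤ, SepVerts G J (γ m) (γ n)

/-- `HQC(γ)`: the maximal size of two transverse collections of hyperplanes
crossing `γ`. -/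
noncomputable def hqc (G : SimpleGraph V) (γ : ℤ → V) : ℕ∞ :=
  sSup {n : ℕ∞ | ∃ H₁ H₂ : Finset (Set (Sym2 V)), (H₁.card : ℕ∞) = n ∧ (H₂.card : ℕ∞) = n ∧
    (∀ J ∈ H₁, IsHyperplane G J ∧ Crosses G J γ) ∧
    (∀ J ∈ H₂, IsHyperplane G J ∧ Crosses G J γ) ∧
    (∀ J ∈ H₁, ∀ K ∈ H₂, Transverse G J K)}

/-- Two hyperplanes are strongly separated if no hyperplane is transverse to both. -/
def StronglySeparated (G : SimpleGraph V) (A B : Set (Sym2 V)) : Prop :=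
  ∀ J : Set (Sym2 V), IsHyperplane G J → ¬ (Transverse G J A ∧ Transverse G J B)

/-- `J` separates the hyperplanes `A` and `B`: their carriers lie in distinct sectors. -/
def SepHyps (G : SimpleGraph V) (J A B : Set (Sym2 V)) : Prop :=
  SepSets G J (carrier A) (carrier B)

/-- `ss(A,B)`: the maximal number of pairwise strongly separated hyperplanes
separating `A` and `B`. -/
noncomputable def ssNum (G : SimpleGraph V) (A B : Set (Sym2 V)) : ℕ∞ :=
  sSup {n : ℕ∞ | ∃ F : Finset (Set (Sym2 V)), (F.card : ℕ∞) = n ∧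
    (∀ J ∈ F, IsHyperplane G J ∧ SepHyps G J A B) ∧
    (∀ J ∈ F, ∀ K ∈ F, J ≠ K → StronglySeparated G J K)}

/-- `δ`-hyperbolicity of a graph: every side of a geodesic triangle lies in the
`δ`-neighbourhood of the two other sides. -/
def GraphHyperbolic {W : Type*} (H : SimpleGraph W) (δ : ℝ) : Prop :=
  ∀ (a b c : W) (p : H.Walk a b) (q : H.Walk b c) (r : H.Walk a c),
    p.length = H.dist a b → q.length = H.dist b c → r.length = H.dist a c →
    ∀ v ∈ p.support, ∃ w : W, (w ∈ q.support ∨ w ∈ r.support) ∧ (H.dist v w : ℝ) ≤ δ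

/-- An inversion: an isometry stabilising a hyperplane and permuting its sectors
non-trivially. -/
def IsInversion (G : SimpleGraph V) (h : Equiv.Perm V) : Prop :=
  ∃ J : Set (Sym2 V), IsHyperplane G J ∧ Sym2.map h '' J = J ∧
    ∃ S : Set V, IsSector G J S ∧ h '' S ≠ S

/-- The bi-infinite path obtained by concatenating the `⟨g⟩`-translates of the
path `p`. -/
noncomputable def concatTranslates {G : SimpleGraph V} (g : Equiv.Perm V) {x y : V}
    (p : G.Walk x y) (n : ℤ) : V :=
  (g ^ (n / (p.length : ℤ))) (p.getVert (n % (p.length : ℤ)).toNat)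

section AuxAxis

variable {V : Type*} {G : SimpleGraph V}

lemma IsAut.one' : IsAut G 1 := fun x y => by simp

lemma IsAut.mul {g h : Equiv.Perm V} (hg : IsAut G g) (hh : IsAut G h) :
    IsAut G (g * h) := fun x y => by
  simpa only [Equiv.Perm.mul_apply] using (hg (h x) (h y)).trans (hh x y)

lemma IsAut.inv {g : Equiv.Perm V} (hg : IsAut G g) : IsAut G g⁻¹ := hg.symm

lemma IsAut.pow {g : Equiv.Perm V} (hg : IsAut G g) (n : ℕ) : IsAut G (g ^ n) := by
  induction n with
  | zero => simpa using (IsAut.one' : IsAut G 1)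
  | succ n ih => rw [pow_succ]; exact ih.mul hg

lemma IsAut.zpow {g : Equiv.Perm V} (hg : IsAut G g) (k : ℤ) : IsAut G (g ^ k) := by
  induction k using Int.induction_on with
  | zero => simpa using (IsAut.one' : IsAut G 1)
  | succ n ih => rw [zpow_add_one]; exact ih.mul hg
  | pred n ih => rw [zpow_sub_one]; exact ih.mul hg.inv

lemma IsAut.dist_le' (hconn : G.Connected) {g : Equiv.Perm V} (hg : IsAut G g) (x y : V) :
    G.dist (g x) (g y) ≤ G.dist x y := by
  obtain ⟨p, hp⟩ := hconn.exists_walk_length_eq_dist x y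
  calc G.dist (g x) (g y) ≤ (p.map ⟨g, fun h => (hg _ _).mpr h⟩).length :=
        SimpleGraph.dist_le _
    _ = p.length := SimpleGraph.Walk.length_map _ _
    _ = G.dist x y := hp

lemma IsAut.dist_eq (hconn : G.Connected) {g : Equiv.Perm V} (hg : IsAut G g) (x y : V) :
    G.dist (g x) (g y) = G.dist x y := by
  refine le_antisymm (hg.dist_le' hconn x y) ?_
  have h := hg.symm.dist_le' hconn (g x) (g y)
  simpa using h

lemma dist_le_one_of_adj {x y : V} (h : G.Adj x y) : G.dist x y ≤ 1 := by
  simpa using SimpleGraph.dist_le h.toWalk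

lemma dist_chain (hconn : G.Connected) (f : ℤ → V)
    (hf : ∀ k : ℤ, G.Adj (f k) (f (k + 1))) (m : ℤ) (k : ℕ) :
    G.dist (f m) (f (m + k)) ≤ k := by
  induction k with
  | zero => simp
  | succ k ih =>
      have h1 : G.dist (f (m + k)) (f (m + k + 1)) ≤ 1 := dist_le_one_of_adj (hf (m + k))
      have e : (m + ((k : ℤ) + 1)) = (m + k) + 1 := by ring
      have t := hconn.dist_triangle (u := f m) (v := f (m + k)) (w := f (m + k + 1))
      calc G.dist (f m) (f (m + (k + 1 : ℕ))) = G.dist (f m) (f (m + k + 1)) := by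
            rw [show (m + ((k : ℕ) + 1 : ℕ) : ℤ) = m + k + 1 by push_cast; ring]
        _ ≤ G.dist (f m) (f (m + k)) + G.dist (f (m + k)) (f (m + k + 1)) := t
        _ ≤ k + 1 := by omega

end AuxAxis

/-- If an isometry `g` of a connected graph acts as a translation of
length `ℓ ≥ 1` on a bi-infinite geodesic, then `d(x, g·x) ≥ ℓ` for every vertex `x`;
and any vertex with `d(x, g·x) = ℓ` satisfies `d(x, gⁿ·x) = n·ℓ` for all `n`, hence
lies on a bi-infinite geodesic on which `g` acts as a translation of length `ℓ`. -/
theorem axis_from_another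
    {V : Type*} (G : SimpleGraph V) (hconn : G.Connected)
    (g : Equiv.Perm V) (hg : IsAut G g)
    (γ : ℤ → V) (hγ : IsBiGeodesic G γ) (ℓ : ℕ) (hℓ : 1 ≤ ℓ)
    (htr : ∀ n : ℤ, g (γ n) = γ (n + ℓ)) :
    (∀ x : V, ℓ ≤ G.dist x (g x)) ∧
    ∀ x : V, G.dist x (g x) = ℓ →
      (∀ n : ℕ, G.dist x ((g ^ n) x) = n * ℓ) ∧
      ∃ γ' : ℤ → V, IsBiGeodesic G γ' ∧ (∀ n : ℤ, g (γ' n) = γ' (n + ℓ)) ∧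
        ∃ i : ℤ, γ' i = x := by
  classical
  -- Part 1, in a general form applicable to powers of `g`.
  have part1 : ∀ (h : Equiv.Perm V), IsAut G h → ∀ t : ℕ, 1 ≤ t →
      (∀ n : ℤ, h (γ n) = γ (n + t)) → ∀ x : V, t ≤ G.dist x (h x) := by
    intro h hh t ht htrh x
    by_contra hcon
    push_neg at hcon
    set c := G.dist x (h x) with hcdef
    set D := G.dist (γ 0) x with hDdef
    have hgam : ∀ n : ℕ, (h ^ n) (γ 0) = γ ((n * t : ℕ) : ℤ) := by
      intro n
      induction n with
      | zero => simp
      | succ n ih =>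
          rw [pow_succ', Equiv.Perm.mul_apply, ih, htrh]
          congr 1; push_cast; ring
    have hdistpow : ∀ n : ℕ, G.dist x ((h ^ n) x) ≤ n * c := by
      intro n
      induction n with
      | zero => simp
      | succ n ih =>
          have h1 : G.dist ((h ^ n) x) ((h ^ (n + 1)) x) = c := by
            rw [pow_succ, Equiv.Perm.mul_apply, (hh.pow n).dist_eq hconn x (h x)]
          calc G.dist x ((h ^ (n + 1)) x)
              ≤ G.dist x ((h ^ n) x) + G.dist ((h ^ n) x) ((h ^ (n + 1)) x) :=
                hconn.dist_triangle
            _ ≤ n * c + c := by omega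
            _ = (n + 1) * c := by ring
    have key : ∀ n : ℕ, n * t ≤ 2 * D + n * c := by
      intro n
      have e1 : G.dist (γ 0) (γ ((n * t : ℕ) : ℤ)) = n * t := by
        rw [SimpleGraph.dist_comm]
        have := hγ ((n * t : ℕ) : ℤ) 0
        simpa [Int.natAbs_mul] using this
      have e2 : G.dist ((h ^ n) x) ((h ^ n) (γ 0)) = D := by
        rw [(hh.pow n).dist_eq hconn, SimpleGraph.dist_comm]
      have t1 : G.dist (γ 0) ((h ^ n) (γ 0)) ≤
          G.dist (γ 0) ((h ^ n) x) + G.dist ((h ^ n) x) ((h ^ n) (γ 0)) :=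
        hconn.dist_triangle
      have t2 : G.dist (γ 0) ((h ^ n) x) ≤ G.dist (γ 0) x + G.dist x ((h ^ n) x) :=
        hconn.dist_triangle
      have := hdistpow n
      rw [hgam n] at t1 e2
      omega
    have h2 := key (2 * D + 1)
    have h3 : (2 * D + 1) * (c + 1) ≤ (2 * D + 1) * t := Nat.mul_le_mul_left _ (by omega)
    nlinarith
  refine ⟨part1 g hg ℓ hℓ htr, ?_⟩
  intro x hx
  have htrpow : ∀ (n : ℕ) (m : ℤ), (g ^ n) (γ m) = γ (m + (n * ℓ : ℕ)) := by
    intro n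
    induction n with
    | zero => intro m; simp
    | succ n ih =>
        intro m
        rw [pow_succ, Equiv.Perm.mul_apply, htr, ih]
        congr 1; push_cast; ring
  have hdpow : ∀ n : ℕ, G.dist x ((g ^ n) x) = n * ℓ := by
    have hup : ∀ n : ℕ, G.dist x ((g ^ n) x) ≤ n * ℓ := by
      intro n
      induction n with
      | zero => simp
      | succ n ih =>
          have h1 : G.dist ((g ^ n) x) ((g ^ (n + 1)) x) = ℓ := by
            rw [pow_succ, Equiv.Perm.mul_apply, (hg.pow n).dist_eq hconn x (g x), hx]
          calc G.dist x ((g ^ (n + 1)) x)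
              ≤ G.dist x ((g ^ n) x) + G.dist ((g ^ n) x) ((g ^ (n + 1)) x) :=
                hconn.dist_triangle
            _ ≤ n * ℓ + ℓ := by omega
            _ = (n + 1) * ℓ := by ring
    intro n
    rcases Nat.eq_zero_or_pos n with rfl | hn
    · simp
    · refine le_antisymm (hup n) ?_
      refine part1 (g ^ n) (hg.pow n) (n * ℓ) (Nat.mul_pos hn hℓ) ?_ x
      intro m; exact htrpow n m
  refine ⟨hdpow, ?_⟩
  -- construct the axis through x
  obtain ⟨p, hp⟩ := hconn.exists_walk_length_eq_dist x (g x)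
  rw [hx] at hp
  set L : ℤ := (ℓ : ℤ) with hLdef
  have hL : 0 < L := by rw [hLdef]; exact_mod_cast hℓ
  set γ' : ℤ → V := fun n => (g ^ (n / L)) (p.getVert (n % L).toNat) with hγ'def
  have hgetlen : p.getVert ℓ = g x := by rw [← hp]; exact p.getVert_length
  have hmul : ∀ k : ℤ, γ' (k * L) = (g ^ k) x := by
    intro k
    have h1 : k * L / L = k := Int.mul_ediv_cancel k hL.ne'
    have h2 : k * L % L = 0 := Int.mul_emod_left k L
    simp only [hγ'def, h1, h2, Int.toNat_zero, SimpleGraph.Walk.getVert_zero]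
  have hadj : ∀ n : ℤ, G.Adj (γ' n) (γ' (n + 1)) := by
    intro n
    have hr0 : 0 ≤ n % L := Int.emod_nonneg n hL.ne'
    have hrL : n % L < L := Int.emod_lt_of_pos n hL
    have hilt : (n % L).toNat < p.length := by
      rw [hp]
      have : ((n % L).toNat : ℤ) < (ℓ : ℤ) := by rw [Int.toNat_of_nonneg hr0]; exact hrL
      exact_mod_cast this
    have hstep : γ' (n + 1) = (g ^ (n / L)) (p.getVert ((n % L).toNat + 1)) := by
      rcases eq_or_lt_of_le (by omega : n % L + 1 ≤ L) with heq | hlt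
      · have hn1 : n + 1 = (n / L + 1) * L := by
          have e := Int.mul_ediv_add_emod n L
          have : (n / L + 1) * L = L * (n / L) + L := by ring
          rw [this]; linarith
        have ht1 : ((n % L).toNat : ℤ) + 1 = (ℓ : ℤ) := by
          rw [Int.toNat_of_nonneg hr0]; exact heq
        have ht2 : (n % L).toNat + 1 = ℓ := by exact_mod_cast ht1
        calc γ' (n + 1) = γ' ((n / L + 1) * L) := by rw [hn1]
          _ = (g ^ (n / L + 1)) x := hmul _
          _ = (g ^ (n / L)) (g x) := by rw [zpow_add_one, Equiv.Perm.mul_apply]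
          _ = (g ^ (n / L)) (p.getVert ((n % L).toNat + 1)) := by rw [ht2, hgetlen]
      · have huniq : (n + 1) / L = n / L ∧ (n + 1) % L = n % L + 1 := by
          rw [Int.ediv_emod_unique hL]
          refine ⟨?_, by omega, hlt⟩
          have e := Int.mul_ediv_add_emod n L
          linarith
        have ht3 : (n % L + 1).toNat = (n % L).toNat + 1 :=
          Int.toNat_add hr0 (by norm_num)
        simp only [hγ'def, huniq.1, huniq.2, ht3]
    rw [hstep]
    exact ((hg.zpow (n / L)) _ _).mpr (p.adj_getVert_succ hilt)
  have hequiv : ∀ n : ℤ, g (γ' n) = γ' (n + L) := by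
    intro n
    have hq : (n + L) / L = n / L + 1 := by
      have := Int.add_mul_ediv_right n 1 hL.ne'
      simpa using this
    have hr : (n + L) % L = n % L := by
      have := Int.add_mul_emod_self_right (a := n) (b := 1) (c := L)
      rwa [one_mul] at this
    simp only [hγ'def, hq, hr]
    rw [add_comm (n / L) 1, zpow_one_add, Equiv.Perm.mul_apply]
  have hdmul : ∀ j k : ℤ, j ≤ k → (G.dist (γ' (j * L)) (γ' (k * L)) : ℤ) = (k - j) * L := by
    intro j k hjk
    have hkj : ((k - j).toNat : ℤ) = k - j := Int.toNat_of_nonneg (by omega)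
    have e1 : (g ^ j) ((g ^ (k - j)) x) = (g ^ k) x := by
      rw [← Equiv.Perm.mul_apply, ← zpow_add]
      congr 1; ring
    have e2 : (g ^ (k - j)) x = (g ^ ((k - j).toNat)) x := by
      rw [← zpow_natCast g (k - j).toNat, hkj]
    rw [hmul j, hmul k, ← e1, (hg.zpow j).dist_eq hconn, e2, hdpow]
    push_cast
    rw [hkj]
  have hubZ : ∀ m n : ℤ, m ≤ n → (G.dist (γ' m) (γ' n) : ℤ) ≤ n - m := by
    intro m n h
    have h2 := dist_chain hconn γ' hadj m (n - m).toNat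
    have e : m + ((n - m).toNat : ℤ) = n := by rw [Int.toNat_of_nonneg (by omega)]; ring
    rw [e] at h2
    calc (G.dist (γ' m) (γ' n) : ℤ) ≤ ((n - m).toNat : ℤ) := by exact_mod_cast h2
      _ = n - m := Int.toNat_of_nonneg (by omega)
  have key : ∀ m n : ℤ, m ≤ n → (G.dist (γ' m) (γ' n) : ℤ) = n - m := by
    intro m n hmn
    refine le_antisymm (hubZ m n hmn) ?_
    set a : ℤ := (m / L) * L with hadef
    set b : ℤ := (n / L + 1) * L with hbdef
    have ham : a ≤ m := Int.ediv_mul_le m hL.ne'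
    have hnb : n < b := Int.lt_ediv_add_one_mul_self n hL
    have hamn : a ≤ n := le_trans ham hmn
    have hqq : m / L ≤ n / L + 1 := by
      have hab' : m / L * L < (n / L + 1) * L := by
        calc m / L * L = a := hadef.symm
          _ ≤ m := ham
          _ ≤ n := hmn
          _ < b := hnb
          _ = (n / L + 1) * L := hbdef
      exact le_of_lt (lt_of_mul_lt_mul_right hab' hL.le)
    have hab : (G.dist (γ' a) (γ' b) : ℤ) = b - a := by
      rw [hdmul (m / L) (n / L + 1) hqq]; ring
    have t1 : G.dist (γ' a) (γ' b) ≤ G.dist (γ' a) (γ' m) + G.dist (γ' m) (γ' b) :=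
      hconn.dist_triangle
    have t2 : G.dist (γ' m) (γ' b) ≤ G.dist (γ' m) (γ' n) + G.dist (γ' n) (γ' b) :=
      hconn.dist_triangle
    have u1 := hubZ a m ham
    have u2 := hubZ n b (by omega)
    push_cast at t1 t2
    omega
  refine ⟨γ', ?_, ?_, 0, ?_⟩
  · intro m n
    rcases le_total n m with h | h
    · have hc := key n m h
      rw [SimpleGraph.dist_comm]
      omega
    · have hc := key m n h
      omega
  · intro n
    exact hequiv n
  · simpa using hmul 0
end QM
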